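/- Let X be a compact metric space, T : X → X a continuous map, and (h_n)_{n≥1} a sequence of continuous functions h_n : X → ℝ that is almost additive with respect to T with constant C > 0, and suppose lim_{n→∞} ‖h_n‖_∞/n = 0. Then for every k-periodic point x₀ ∈ X (i.e. T^k(x₀) = x₀ for some k ≥ 1) one has |h_{qk}(x₀)| ≤ C for every q ≥ 1. -/

import Mathlib

open Filter Topology

theorem statement2 {X : Type*} [MetricSpace X] [CompactSpace X]
    (T : X → X) (hT : Continuous T)
    (h : ℕ → X → ℝ) (hcont : ∀ n, Continuous (h n))
    (C : ℝ) (hC : 0 < C)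
    (hAA : ∀ (x : X) (n m : ℕ), 1 ≤ n → 1 ≤ m →
      -C + h n x + h m (T^[n] x) ≤ h (n + m) x ∧
        h (n + m) x ≤ h n x + h m (T^[n] x) + C)
    (hlim : Tendsto (fun n : ℕ => (⨆ x : X, |h n x|) / (n : ℝ)) atTop (nhds 0))
    (x₀ : X) (k : ℕ) (hk : 1 ≤ k) (hper : T^[k] x₀ = x₀) :
    ∀ (q : ℕ), 1 ≤ q → |h (q * k) x₀| ≤ C := by
  intro q hq
  -- periodicity for multiples
  have hperiod : ∀ m : ℕ, T^[m * (q * k)] x₀ = x₀ := by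
    intro m
    have : Function.IsPeriodicPt T k x₀ := hper
    have h2 : Function.IsPeriodicPt T ((m * q) * k) x₀ := this.const_mul (m * q)
    have : (m * q) * k = m * (q * k) := by ring
    rw [this] at h2
    exact h2
  set b : ℕ → ℝ := fun n => h (n * (q * k)) x₀ with hb
  have hqk : 1 ≤ q * k := Nat.one_le_iff_ne_zero.mpr (by positivity)
  -- induction bound
  have key : ∀ n : ℕ, 1 ≤ n → |b n - n * b 1| ≤ n * C := by
    intro n hn
    induction n with
    | zero => omega
    | succ n ih =>
      rcases Nat.eq_or_lt_of_le hn with h1 | h1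
      · simp [← h1]
        positivity
      · have hn1 : 1 ≤ n := by omega
        have ih' := ih hn1
        have hAA' := hAA x₀ (n * (q * k)) (q * k) (le_trans hn1 (Nat.le_mul_of_pos_right n (by omega))) hqk
        rw [hperiod n] at hAA'
        have heq : n * (q * k) + q * k = (n + 1) * (q * k) := by ring
        rw [heq] at hAA'
        have : |b (n + 1) - (b n + b 1)| ≤ C := by
          rw [abs_le]
          constructor
          · have := hAA'.1
            simp only [hb, one_mul]
            linarith
          · have := hAA'.2
            simp only [hb, one_mul]
            linarith
        calc |b (n + 1) - (↑(n + 1)) * b 1|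
            = |(b (n + 1) - (b n + b 1)) + (b n - n * b 1)| := by
              push_cast; ring_nf
          _ ≤ |b (n + 1) - (b n + b 1)| + |b n - n * b 1| := abs_add_le _ _
          _ ≤ C + n * C := add_le_add this ih'
          _ = (↑(n + 1)) * C := by push_cast; ring
  -- sup bound
  have hsup : ∀ n : ℕ, |b n| ≤ ⨆ x : X, |h (n * (q * k)) x| := by
    intro n
    apply le_ciSup (f := fun x => |h (n * (q * k)) x|)
    have : IsCompact (Set.range fun x : X => |h (n * (q * k)) x|) :=
      isCompact_range ((hcont _).abs)
    exact this.bddAbove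
  -- |b 1| ≤ |b n| / n + C for all n ≥ 1
  have hb1 : ∀ n : ℕ, 1 ≤ n → |b 1| - C ≤ (⨆ x : X, |h (n * (q * k)) x|) / n := by
    intro n hn
    have hnpos : (0 : ℝ) < n := by exact_mod_cast hn
    have k1 := key n hn
    have : (n : ℝ) * |b 1| ≤ |b n| + n * C := by
      calc (n : ℝ) * |b 1| = |(n : ℝ) * b 1| := by
            rw [abs_mul, abs_of_pos hnpos]
        _ = |b n - ((b n - n * b 1))| := by ring_nf
        _ ≤ |b n| + |b n - n * b 1| := abs_sub _ _
        _ ≤ |b n| + n * C := by linarith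
    have hs := hsup n
    rw [le_div_iff₀ hnpos]
    nlinarith
  -- limit argument
  have hcomp : Tendsto (fun n : ℕ => (⨆ x : X, |h (n * (q * k)) x|) / (n * (q * k) : ℕ))
      atTop (nhds 0) := by
    apply hlim.comp
    exact tendsto_atTop_atTop_of_monotone' (fun a b hab => Nat.mul_le_mul_right _ hab)
      (by
        rintro ⟨N, hN⟩
        have := hN (Set.mem_range_self (N + 1))
        have h2 : N + 1 ≤ (N + 1) * (q * k) := Nat.le_mul_of_pos_right _ (by omega)
        omega)
  have hmul : Tendsto (fun n : ℕ => (⨆ x : X, |h (n * (q * k)) x|) / (n * (q * k) : ℕ) * (q * k : ℕ))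
      atTop (nhds 0) := by
    simpa using hcomp.mul_const ((q * k : ℕ) : ℝ)
  have hfin : |b 1| - C ≤ 0 := by
    apply ge_of_tendsto hmul
    filter_upwards [eventually_ge_atTop 1] with n hn
    have hnpos : (0 : ℝ) < n := by exact_mod_cast hn
    have hqkpos : (0 : ℝ) < (q * k : ℕ) := by exact_mod_cast hqk
    have : ((⨆ x : X, |h (n * (q * k)) x|) / (n * (q * k) : ℕ)) * ((q * k : ℕ) : ℝ)
        = (⨆ x : X, |h (n * (q * k)) x|) / n := by
      push_cast
      field_simp
    rw [this]
    exact hb1 n hn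
  have : b 1 = h (q * k) x₀ := by simp [hb]
  rw [← this]
  linarith
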